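/- Let {τ_α}_{α∈Ω} be a normalized continuous Bessel family for a d-dimensional Hilbert space H. Then for every natural number m ≥ 1, ∫_Ω ∫_Ω |⟨τ_α, τ_β⟩|^{2m} dμ(α) dμ(β) ≥ μ(Ω)² / C(d+m−1, m), where C(d+m−1, m) is the binomial coefficient. -/

import Mathlib

open MeasureTheory
open scoped InnerProductSpace ENNReal ComplexConjugate

private lemma measurable_msprod {Ω ι : Type*} [MeasurableSpace Ω] (s : Multiset ι)
    (g : ι → Ω → ℂ) (hg : ∀ i, Measurable (g i)) :
    Measurable fun α => (s.map fun i => g i α).prod := by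
  induction s using Multiset.induction_on with
  | empty => simpa using measurable_const
  | cons a s ih =>
    simp only [Multiset.map_cons, Multiset.prod_cons]
    exact (hg a).mul ih

private lemma norm_msprod_le {ι : Type*} (s : Multiset ι) (f : ι → ℂ)
    (hf : ∀ i, ‖f i‖ ≤ 1) : ‖(s.map f).prod‖ ≤ 1 := by
  induction s using Multiset.induction_on with
  | empty => simp
  | cons a s ih =>
    rw [Multiset.map_cons, Multiset.prod_cons, norm_mul]
    calc ‖f a‖ * ‖(s.map f).prod‖ ≤ 1 * 1 :=
      mul_le_mul (hf a) ih (norm_nonneg _) zero_le_one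
    _ = 1 := by ring

private lemma integrable_of_bound {Ω : Type*} [MeasurableSpace Ω] {μ : Measure Ω}
    [IsFiniteMeasure μ] {𝕜 : Type*} [RCLike 𝕜] {f : Ω → 𝕜} (hf : Measurable f)
    (C : ℝ) (hC : ∀ α, ‖f α‖ ≤ C) : Integrable f μ :=
  Integrable.mono' (integrable_const C) hf.aestronglyMeasurable
    (Filter.Eventually.of_forall hC)

private lemma re_conj_mul (z : ℂ) : ((starRingEnd ℂ) z * z).re = ‖z‖ ^ 2 := by
  rw [RCLike.conj_mul]
  norm_cast

private lemma mul_conj_eq (z : ℂ) : z * (starRingEnd ℂ) z = ((‖z‖ ^ 2 : ℝ) : ℂ) := by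
  rw [RCLike.mul_conj]
  norm_cast

private lemma key_eq {Ω ι : Type*} [MeasurableSpace Ω] (μ : Measure Ω) [IsFiniteMeasure μ]
    (K : Finset ι) (v : ι → Ω → ℂ) (C : ι → ℝ)
    (hv_meas : ∀ k, Measurable (v k)) (hv_bound : ∀ k α, ‖v k α‖ ≤ C k)
    (F : Ω → Ω → ℂ) (m : ℕ)
    (hE : ∀ α β, (F α β) ^ m = ∑ k ∈ K, conj (v k α) * v k β) :
    ∫ α, ∫ β, ‖F α β‖ ^ (2 * m) ∂μ ∂μ
      = ∑ k ∈ K, ∑ l ∈ K, ‖∫ α, v k α * conj (v l α) ∂μ‖ ^ 2 := by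
  classical
  set M : ι → ι → ℂ := fun k l => ∫ α, v k α * conj (v l α) ∂μ with hM_def
  have hconj_meas : ∀ l, Measurable fun α => conj (v l α) := fun l =>
    Complex.continuous_conj.measurable.comp (hv_meas l)
  have hpair_meas : ∀ k l, Measurable fun α => v k α * conj (v l α) :=
    fun k l => (hv_meas k).mul (hconj_meas l)
  have hpair_bound : ∀ k l α, ‖v k α * conj (v l α)‖ ≤ C k * C l := by
    intro k l α
    rw [norm_mul, RCLike.norm_conj]
    exact mul_le_mul (hv_bound k α) (hv_bound l α) (norm_nonneg _)
      (le_trans (norm_nonneg _) (hv_bound k α))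
  have hpair_int : ∀ k l, Integrable (fun α => v k α * conj (v l α)) μ :=
    fun k l => integrable_of_bound (hpair_meas k l) _ (hpair_bound k l)
  have hre_int : ∀ {f : Ω → ℂ}, Integrable f μ → Integrable (fun x => (f x).re) μ :=
    fun hf => hf.re
  have hpt : ∀ α β, ‖F α β‖ ^ (2 * m)
      = ∑ k ∈ K, ∑ l ∈ K, ((v l α * conj (v k α)) * (v k β * conj (v l β))).re := by
    intro α β
    have h1 : ‖F α β‖ ^ (2 * m) = ((conj ((F α β) ^ m)) * ((F α β) ^ m)).re := by
      rw [pow_mul', ← norm_pow, ← re_conj_mul]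
    have hconjE : conj (∑ k ∈ K, conj (v k α) * v k β)
        = ∑ l ∈ K, v l α * conj (v l β) := by
      rw [map_sum]
      exact Finset.sum_congr rfl fun l _ => by rw [map_mul, RCLike.conj_conj]
    rw [h1, hE α β, hconjE, Finset.sum_mul_sum, Finset.sum_comm, Complex.re_sum]
    refine Finset.sum_congr rfl fun k _ => ?_
    rw [Complex.re_sum]
    refine Finset.sum_congr rfl fun l _ => ?_
    congr 1
    ring
  have hInner : ∀ α, ∫ β, ‖F α β‖ ^ (2 * m) ∂μ
      = ∑ k ∈ K, ∑ l ∈ K, ((v l α * conj (v k α)) * M k l).re := by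
    intro α
    calc ∫ β, ‖F α β‖ ^ (2 * m) ∂μ
        = ∫ β, ∑ k ∈ K, ∑ l ∈ K,
            ((v l α * conj (v k α)) * (v k β * conj (v l β))).re ∂μ :=
          integral_congr_ae (Filter.Eventually.of_forall fun β => hpt α β)
    _ = ∑ k ∈ K, ∑ l ∈ K,
          ∫ β, ((v l α * conj (v k α)) * (v k β * conj (v l β))).re ∂μ := by
          rw [integral_finset_sum K fun k _ => integrable_finset_sum K fun l _ =>
            hre_int ((hpair_int k l).const_mul _)]
          exact Finset.sum_congr rfl fun k _ => integral_finset_sum K fun l _ =>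
            hre_int ((hpair_int k l).const_mul _)
    _ = ∑ k ∈ K, ∑ l ∈ K, ((v l α * conj (v k α)) * M k l).re := by
          refine Finset.sum_congr rfl fun k _ => Finset.sum_congr rfl fun l _ => ?_
          have h := Complex.reCLM.integral_comp_comm ((hpair_int k l).const_mul
            (v l α * conj (v k α)))
          simp only [Complex.reCLM_apply] at h
          rw [h, integral_const_mul]
  calc ∫ α, ∫ β, ‖F α β‖ ^ (2 * m) ∂μ ∂μ
      = ∫ α, ∑ k ∈ K, ∑ l ∈ K, ((v l α * conj (v k α)) * M k l).re ∂μ :=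
        integral_congr_ae (Filter.Eventually.of_forall hInner)
  _ = ∑ k ∈ K, ∑ l ∈ K, ∫ α, ((v l α * conj (v k α)) * M k l).re ∂μ := by
        rw [integral_finset_sum K fun k _ => integrable_finset_sum K fun l _ =>
          hre_int ((hpair_int l k).mul_const _)]
        exact Finset.sum_congr rfl fun k _ => integral_finset_sum K fun l _ =>
          hre_int ((hpair_int l k).mul_const _)
  _ = ∑ k ∈ K, ∑ l ∈ K, ‖M k l‖ ^ 2 := by
        refine Finset.sum_congr rfl fun k _ => Finset.sum_congr rfl fun l _ => ?_
        have h := Complex.reCLM.integral_comp_comm ((hpair_int l k).mul_const (M k l))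
        simp only [Complex.reCLM_apply] at h
        rw [h, integral_mul_const]
        have hMlk : (∫ α, v l α * conj (v k α) ∂μ) = conj (M k l) := by
          rw [hM_def, ← integral_conj]
          refine integral_congr_ae (Filter.Eventually.of_forall fun α => ?_)
          show v l α * conj (v k α) = conj (v k α * conj (v l α))
          rw [map_mul, RCLike.conj_conj, mul_comm]
        rw [hMlk, re_conj_mul]

private lemma key_cs {Ω ι : Type*} [MeasurableSpace Ω] (μ : Measure Ω) [IsFiniteMeasure μ]
    (K : Finset ι) (v : ι → Ω → ℂ) (C : ι → ℝ)
    (hv_meas : ∀ k, Measurable (v k)) (hv_bound : ∀ k α, ‖v k α‖ ≤ C k)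
    (hv_sumsq : ∀ α, ∑ k ∈ K, ‖v k α‖ ^ 2 = 1) :
    (μ Set.univ).toReal ^ 2
      ≤ (∑ k ∈ K, ∑ l ∈ K, ‖∫ α, v k α * conj (v l α) ∂μ‖ ^ 2) * K.card := by
  classical
  set M : ι → ι → ℂ := fun k l => ∫ α, v k α * conj (v l α) ∂μ with hM_def
  set t : ι → ℝ := fun k => ∫ α, ‖v k α‖ ^ 2 ∂μ with ht_def
  have ht_nonneg : ∀ k, 0 ≤ t k := fun k => integral_nonneg fun α => sq_nonneg _
  have hsq_int : ∀ k, Integrable (fun α => ‖v k α‖ ^ 2) μ := by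
    intro k
    refine integrable_of_bound ((hv_meas k).norm.pow_const 2) (C k ^ 2) fun α => ?_
    rw [Real.norm_eq_abs, abs_of_nonneg (sq_nonneg _)]
    exact pow_le_pow_left₀ (norm_nonneg _) (hv_bound k α) 2
  have ht_sum : ∑ k ∈ K, t k = (μ Set.univ).toReal := by
    rw [ht_def, ← integral_finset_sum K fun k _ => hsq_int k]
    calc ∫ α, ∑ k ∈ K, ‖v k α‖ ^ 2 ∂μ = ∫ _, (1 : ℝ) ∂μ :=
          integral_congr_ae (Filter.Eventually.of_forall fun α => hv_sumsq α)
    _ = (μ Set.univ).toReal := by simp [Measure.real]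
  have hMkk : ∀ k, M k k = ((t k : ℝ) : ℂ) := by
    intro k
    show (∫ α, v k α * conj (v k α) ∂μ) = ((∫ α, ‖v k α‖ ^ 2 ∂μ : ℝ) : ℂ)
    calc (∫ α, v k α * conj (v k α) ∂μ) = ∫ α, ((‖v k α‖ ^ 2 : ℝ) : ℂ) ∂μ :=
          integral_congr_ae (Filter.Eventually.of_forall fun α => mul_conj_eq (v k α))
    _ = ((∫ α, ‖v k α‖ ^ 2 ∂μ : ℝ) : ℂ) := integral_ofReal (f := fun α => ‖v k α‖ ^ 2)
  have hnormMkk : ∀ k, ‖M k k‖ = t k := by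
    intro k
    rw [hMkk k, Complex.norm_real, Real.norm_eq_abs, abs_of_nonneg (ht_nonneg k)]
  have hdiag_le : ∑ k ∈ K, ‖M k k‖ ^ 2 ≤ ∑ k ∈ K, ∑ l ∈ K, ‖M k l‖ ^ 2 :=
    Finset.sum_le_sum fun k hk =>
      Finset.single_le_sum (f := fun l => ‖M k l‖ ^ 2) (fun l _ => sq_nonneg _) hk
  calc (μ Set.univ).toReal ^ 2 = (∑ k ∈ K, t k) ^ 2 := by rw [ht_sum]
  _ ≤ K.card * ∑ k ∈ K, t k ^ 2 := sq_sum_le_card_mul_sum_sq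
  _ = (∑ k ∈ K, ‖M k k‖ ^ 2) * K.card := by
      rw [mul_comm]
      congr 1
      exact Finset.sum_congr rfl fun k _ => by rw [hnormMkk k]
  _ ≤ (∑ k ∈ K, ∑ l ∈ K, ‖M k l‖ ^ 2) * K.card :=
      mul_le_mul_of_nonneg_right hdiag_le (Nat.cast_nonneg _)

/-- Higher order continuous Welch bound (integral form):
`∫∫ |⟨τ_α, τ_β⟩|^{2m} dμ dμ ≥ μ(Ω)² / C(d+m−1, m)`. -/
theorem stmt_6
    {Ω : Type*} [MeasurableSpace Ω] (μ : Measure Ω)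
    {H : Type*} [NormedAddCommGroup H] [InnerProductSpace ℂ H] [FiniteDimensional ℂ H]
    (hd : 0 < Module.finrank ℂ H)
    (τ : Ω → H) (b : ℝ) (hb : 0 < b)
    (hmeas : ∀ h : H, Measurable fun α => ⟪h, τ α⟫_ℂ)
    (hbessel : ∀ h : H,
      ∫⁻ α, ENNReal.ofReal (‖⟪h, τ α⟫_ℂ‖ ^ 2) ∂μ ≤ ENNReal.ofReal (b * ‖h‖ ^ 2))
    (hnorm : ∀ α, ‖τ α‖ = 1)
    (m : ℕ) (hm : 1 ≤ m) :
    ∫ α, ∫ β, ‖⟪τ α, τ β⟫_ℂ‖ ^ (2 * m) ∂μ ∂μ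
      ≥ (μ Set.univ).toReal ^ 2
          / ((Module.finrank ℂ H + m - 1).choose m : ℝ) := by
  classical
  set d := Module.finrank ℂ H with hd_def
  let e : OrthonormalBasis (Fin d) ℂ H := stdOrthonormalBasis ℂ H
  set g : Fin d → Ω → ℂ := fun i α => ⟪e i, τ α⟫_ℂ with hg_def
  have hg_meas : ∀ i, Measurable (g i) := fun i => hmeas (e i)
  have he_norm : ∀ i, ‖e i‖ = 1 := fun i => e.orthonormal.1 i
  have hg_bound : ∀ i α, ‖g i α‖ ≤ 1 := by
    intro i α
    calc ‖g i α‖ ≤ ‖e i‖ * ‖τ α‖ := norm_inner_le_norm _ _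
    _ = 1 := by rw [he_norm, hnorm]; ring
  have hone : ∀ α, ⟪τ α, τ α⟫_ℂ = 1 := by
    intro α
    rw [inner_self_eq_norm_sq_to_K, hnorm]
    norm_num
  have hinner_expand : ∀ α β, ⟪τ α, τ β⟫_ℂ = ∑ i, conj (g i α) * g i β := by
    intro α β
    rw [← OrthonormalBasis.sum_inner_mul_inner e (τ α) (τ β)]
    exact Finset.sum_congr rfl fun i _ => by rw [hg_def]; rw [inner_conj_symm]
  have hr1 : ∀ α, ∑ i, ‖g i α‖ ^ 2 = 1 := by
    intro α
    have h : ∑ i, ((‖g i α‖ ^ 2 : ℝ) : ℂ) = 1 := by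
      simpa [RCLike.conj_mul] using (hinner_expand α α).symm.trans (hone α)
    exact_mod_cast h
  haveI hmufin : IsFiniteMeasure μ := by
    constructor
    calc μ Set.univ = ∫⁻ _, (1 : ℝ≥0∞) ∂μ := lintegral_one.symm
    _ = ∫⁻ α, ∑ i, ENNReal.ofReal (‖g i α‖ ^ 2) ∂μ := by
        apply lintegral_congr
        intro α
        rw [← ENNReal.ofReal_sum_of_nonneg fun i _ => sq_nonneg _, hr1 α, ENNReal.ofReal_one]
    _ = ∑ i, ∫⁻ α, ENNReal.ofReal (‖g i α‖ ^ 2) ∂μ :=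
        lintegral_finset_sum _ fun i _ =>
          ENNReal.measurable_ofReal.comp ((hg_meas i).norm.pow_const 2)
    _ ≤ ∑ i : Fin d, ENNReal.ofReal (b * ‖e i‖ ^ 2) := Finset.sum_le_sum fun i _ => hbessel (e i)
    _ < ⊤ := ENNReal.sum_lt_top.2 fun i _ => ENNReal.ofReal_lt_top
  -- the symmetric-power family
  let K : Finset (Sym (Fin d) m) := Finset.univ.sym m
  have hKuniv : ∀ k : Sym (Fin d) m, k ∈ K := fun k =>
    Finset.mem_sym_iff.2 fun a _ => Finset.mem_univ a
  have hKcard : (K.card : ℝ) = ((d + m - 1).choose m : ℝ) := by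
    have h1 : K = Finset.univ := Finset.eq_univ_iff_forall.2 hKuniv
    rw [h1, Finset.card_univ, Sym.card_sym_eq_choose, Fintype.card_fin]
  let v : Sym (Fin d) m → Ω → ℂ := fun k α =>
    ((Real.sqrt k.val.countPerms : ℝ) : ℂ) * (k.val.map fun i => g i α).prod
  have hconjP : ∀ (s : Multiset (Fin d)) (α : Ω),
      conj ((s.map fun i => g i α).prod) = (s.map fun i => conj (g i α)).prod := by
    intro s α
    rw [map_multiset_prod, Multiset.map_map]
    rfl
  have hvconj : ∀ k α, conj (v k α)
      = ((Real.sqrt k.val.countPerms : ℝ) : ℂ)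
        * (k.val.map fun i => conj (g i α)).prod := by
    intro k α
    simp only [v, map_mul, Complex.conj_ofReal, hconjP]
  have hsq : ∀ k : Sym (Fin d) m,
      ((Real.sqrt k.val.countPerms : ℝ) : ℂ) * ((Real.sqrt k.val.countPerms : ℝ) : ℂ)
        = (k.val.countPerms : ℂ) := by
    intro k
    rw [← Complex.ofReal_mul, Real.mul_self_sqrt (Nat.cast_nonneg _)]
    norm_cast
  have hE : ∀ α β, (⟪τ α, τ β⟫_ℂ) ^ m = ∑ k ∈ K, conj (v k α) * v k β := by
    intro α β
    rw [hinner_expand, Finset.sum_pow]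
    refine Finset.sum_congr rfl fun k _ => ?_
    rw [hvconj, Multiset.prod_map_mul]
    show (k.val.countPerms : ℂ)
        * ((k.val.map fun i => conj (g i α)).prod * (k.val.map fun i => g i β).prod) = _
    rw [show ((Real.sqrt k.val.countPerms : ℝ) : ℂ) * (k.val.map fun i => conj (g i α)).prod
        * (((Real.sqrt k.val.countPerms : ℝ) : ℂ) * (k.val.map fun i => g i β).prod)
        = ((Real.sqrt k.val.countPerms : ℝ) : ℂ) * ((Real.sqrt k.val.countPerms : ℝ) : ℂ)
          * ((k.val.map fun i => conj (g i α)).prod * (k.val.map fun i => g i β).prod) from by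
        ring, hsq]
  have hv_sumsq : ∀ α, ∑ k ∈ K, ‖v k α‖ ^ 2 = 1 := by
    intro α
    have h := hE α α
    rw [hone α, one_pow] at h
    have h2 : (1 : ℂ) = ∑ k ∈ K, ((‖v k α‖ ^ 2 : ℝ) : ℂ) := by
      rw [h]
      exact Finset.sum_congr rfl fun k _ => by rw [RCLike.conj_mul]; norm_cast
    exact_mod_cast h2.symm
  have hv_meas : ∀ k, Measurable (v k) := by
    intro k
    exact measurable_const.mul (measurable_msprod k.val g hg_meas)
  have hv_bound : ∀ k α, ‖v k α‖ ≤ Real.sqrt k.val.countPerms := by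
    intro k α
    show ‖((Real.sqrt k.val.countPerms : ℝ) : ℂ) * (k.val.map fun i => g i α).prod‖ ≤ _
    rw [norm_mul, Complex.norm_real, Real.norm_eq_abs, abs_of_nonneg (Real.sqrt_nonneg _)]
    calc Real.sqrt k.val.countPerms * ‖(k.val.map fun i => g i α).prod‖
        ≤ Real.sqrt k.val.countPerms * 1 :=
          mul_le_mul_of_nonneg_left (norm_msprod_le _ _ fun i => hg_bound i α)
            (Real.sqrt_nonneg _)
    _ = _ := mul_one _
  have hm_le : m ≤ d + m - 1 := by omega
  have hcp : (0 : ℝ) < ((d + m - 1).choose m : ℝ) := by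
    exact_mod_cast Nat.choose_pos hm_le
  rw [ge_iff_le, div_le_iff₀ hcp]
  calc (μ Set.univ).toReal ^ 2
      ≤ (∑ k ∈ K, ∑ l ∈ K, ‖∫ α, v k α * conj (v l α) ∂μ‖ ^ 2) * K.card :=
        key_cs μ K v _ hv_meas hv_bound hv_sumsq
  _ = (∫ α, ∫ β, ‖⟪τ α, τ β⟫_ℂ‖ ^ (2 * m) ∂μ ∂μ) * ((d + m - 1).choose m : ℝ) := by
      rw [← hKcard]
      congr 1
      exact (key_eq μ K v _ hv_meas hv_bound (fun α β => ⟪τ α, τ β⟫_ℂ) m hE).symm
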